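/- arXiv:1310.8025 — 3 statements merged into one kernel-verified Lean document; each statement's English description precedes it below -/
import Mathlib

section
/- Let λ be a positive integer. Define the Boole polynomials Bl_n(x|λ) by the generating function ∑_{n≥0} Bl_n(x|λ) t^n/n! = (1+t)^x / (1 + (1+t)^λ) in ℚ[x][[t]]. Then for every m ≥ 0, ∑_{n=0}^{m} Bl_n(x|λ) S₂(m,n) = (1/2) λ^m E_m(x/λ), where E_m is the m-th Euler polynomial; equivalently, substituting t = e^t - 1 into the Boole generating function yields (2/(e^{λt}+1)) e^{xt} / 2. -/
open Finset PowerSeries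

/-- Stirling numbers of the second kind. -/
def stirling2 : ℕ → ℕ → ℕ
  | 0, 0 => 1
  | 0, _ + 1 => 0
  | _ + 1, 0 => 0
  | n + 1, k + 1 => (k + 1) * stirling2 n (k + 1) + stirling2 n k

/-- Unsigned Stirling numbers of the first kind. -/
def stirling1 : ℕ → ℕ → ℕ
  | 0, 0 => 1
  | 0, _ + 1 => 0
  | _ + 1, 0 => 0
  | n + 1, k + 1 => n * stirling1 n (k + 1) + stirling1 n k

/-- Signed Stirling numbers of the first kind. -/
def s1 (n l : ℕ) : ℚ := (-1) ^ (n - l) * (stirling1 n l : ℚ)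

/-- The exponential generating function `∑ a n * t^n / n!` as a power series over `ℚ`. -/
noncomputable def egf (a : ℕ → ℚ) : PowerSeries ℚ :=
  PowerSeries.mk fun n => a n / (Nat.factorial n : ℚ)

/-- The binomial series `(1+t)^x = ∑ (x)_n t^n / n!` for `x : ℚ`. -/
noncomputable def onePlusTPow (x : ℚ) : PowerSeries ℚ :=
  egf fun n => ∏ i ∈ Finset.range n, (x - i)

/-- `e^{xt}` as a power series over `ℚ`. -/
noncomputable def expXT (x : ℚ) : PowerSeries ℚ := egf fun n => x ^ n

lemma stirling2_zero_right : ∀ m, stirling2 m 0 = if m = 0 then 1 else 0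
  | 0 => rfl
  | _ + 1 => rfl

lemma stirling2_eq_zero : ∀ m n, m < n → stirling2 m n = 0
  | 0, _ + 1, _ => rfl
  | m + 1, n + 1, h => by
    rw [stirling2, stirling2_eq_zero m (n+1) (by omega), stirling2_eq_zero m n (by omega)]
    simp

lemma sum_choose_stirling2 (m : ℕ) : ∀ d, ∑ k ∈ range (m+1), m.choose k * stirling2 k d = stirling2 (m+1) (d+1) := by
  induction m with
  | zero => intro d; cases d <;> simp [stirling2]
  | succ m ih =>
    intro d
    have h2 : ∑ k ∈ range (m+2), m.choose k * stirling2 k d = stirling2 (m+1) (d+1) := by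
      rw [sum_range_succ, Nat.choose_succ_self, zero_mul, add_zero, ih]
    calc ∑ k ∈ range (m+2), (m+1).choose k * stirling2 k d
        = ∑ k ∈ range (m+1), (m+1).choose (k+1) * stirling2 (k+1) d
            + (m+1).choose 0 * stirling2 0 d := sum_range_succ' _ _
      _ = ∑ k ∈ range (m+1), (m.choose k * stirling2 (k+1) d + m.choose (k+1) * stirling2 (k+1) d)
            + m.choose 0 * stirling2 0 d := by
          simp only [Nat.choose_succ_succ, add_mul, Nat.choose_zero_right]
      _ = ∑ k ∈ range (m+1), m.choose k * stirling2 (k+1) d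
            + (∑ k ∈ range (m+1), m.choose (k+1) * stirling2 (k+1) d + m.choose 0 * stirling2 0 d) := by
          rw [sum_add_distrib]; ring
      _ = ∑ k ∈ range (m+1), m.choose k * stirling2 (k+1) d + stirling2 (m+1) (d+1) := by
          rw [← sum_range_succ' (fun k => m.choose k * stirling2 k d), h2]
      _ = stirling2 (m+2) (d+1) := by
          cases d with
          | zero =>
            simp only [stirling2_zero_right]
            simp [show stirling2 (m+2) 1 = 1 * stirling2 (m+1) 1 + stirling2 (m+1) 0 from rfl,
              stirling2_zero_right]
          | succ e =>
            have hrec : ∀ k, stirling2 (k+1) (e+1) = (e+1) * stirling2 k (e+1) + stirling2 k e :=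
              fun k => rfl
            have e1 : ∑ k ∈ range (m+1), m.choose k * stirling2 (k+1) (e+1)
                = (e+1) * stirling2 (m+1) (e+2) + stirling2 (m+1) (e+1) := by
              calc ∑ k ∈ range (m+1), m.choose k * stirling2 (k+1) (e+1)
                  = ∑ k ∈ range (m+1),
                      ((e+1) * (m.choose k * stirling2 k (e+1)) + m.choose k * stirling2 k e) :=
                    sum_congr rfl fun k _ => by rw [hrec]; ring
                _ = (e+1) * ∑ k ∈ range (m+1), m.choose k * stirling2 k (e+1)
                      + ∑ k ∈ range (m+1), m.choose k * stirling2 k e := by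
                    rw [sum_add_distrib, mul_sum]
                _ = (e+1) * stirling2 (m+1) (e+2) + stirling2 (m+1) (e+1) := by rw [ih, ih]
            rw [e1]
            have : stirling2 (m+2) (e+2) = (e+2) * stirling2 (m+1) (e+2) + stirling2 (m+1) (e+1) :=
              rfl
            rw [this]; ring

lemma sum_choose_stirling2' (m k : ℕ) :
    ∑ j ∈ range m, m.choose j * stirling2 j k = (k+1) * stirling2 m (k+1) := by
  have h := sum_choose_stirling2 m k
  rw [sum_range_succ, Nat.choose_self, one_mul] at h
  have : stirling2 (m+1) (k+1) = (k+1) * stirling2 m (k+1) + stirling2 m k := rfl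
  omega

lemma coeff_egf (a : ℕ → ℚ) (n : ℕ) :
    PowerSeries.coeff n (egf a) = a n / (Nat.factorial n : ℚ) := coeff_mk _ _

lemma sum_falling_stirling2 (x : ℚ) (m : ℕ) :
    ∑ n ∈ range (m+1), (∏ i ∈ range n, (x - i)) * stirling2 m n = x ^ m := by
  induction m with
  | zero => simp [stirling2]
  | succ m ih =>
    have h0 : ∑ n ∈ range (m+2), (∏ i ∈ range n, (x - i)) * stirling2 (m+1) n
        = ∑ n ∈ range (m+1), (∏ i ∈ range (n+1), (x - i)) * stirling2 (m+1) (n+1) := by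
      rw [sum_range_succ' (fun n => (∏ i ∈ range n, (x - i)) * stirling2 (m+1) n)]
      simp [stirling2_zero_right]
    rw [h0]
    have h1 : ∀ n ∈ range (m+1), (∏ i ∈ range (n+1), (x - i)) * stirling2 (m+1) (n+1)
        = (n+1 : ℚ) * ((∏ i ∈ range (n+1), (x - i)) * stirling2 m (n+1))
          + (x - n) * ((∏ i ∈ range n, (x - i)) * stirling2 m n) := by
      intro n _
      have : stirling2 (m+1) (n+1) = (n+1) * stirling2 m (n+1) + stirling2 m n := rfl
      rw [this, prod_range_succ]
      push_cast
      ring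
    rw [sum_congr rfl h1, sum_add_distrib]
    have h2 : ∑ n ∈ range (m+1), (n+1 : ℚ) * ((∏ i ∈ range (n+1), (x - i)) * stirling2 m (n+1))
        = ∑ n ∈ range (m+1), (n : ℚ) * ((∏ i ∈ range n, (x - i)) * stirling2 m n) := by
      rw [sum_range_succ, sum_range_succ' (fun n => (n : ℚ) * ((∏ i ∈ range n, (x - i)) * stirling2 m n))]
      simp [stirling2_eq_zero m (m+1) (by omega)]
    rw [h2, ← sum_add_distrib]
    have h3 : ∀ n ∈ range (m+1), (n : ℚ) * ((∏ i ∈ range n, (x - i)) * stirling2 m n)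
        + (x - n) * ((∏ i ∈ range n, (x - i)) * stirling2 m n)
        = x * ((∏ i ∈ range n, (x - i)) * stirling2 m n) := fun n _ => by ring
    rw [sum_congr rfl h3, ← mul_sum, ih, pow_succ, mul_comm]

lemma one_div_fact_mul {j m : ℕ} (h : j ≤ m) :
    (1 : ℚ) / (Nat.factorial j) * (1 / (Nat.factorial (m - j))) =
      (m.choose j : ℚ) / (Nat.factorial m) := by
  have key : ((m.choose j : ℚ)) * (Nat.factorial j) * (Nat.factorial (m-j)) = Nat.factorial m := by
    exact_mod_cast congrArg (Nat.cast : ℕ → ℚ) (Nat.choose_mul_factorial_mul_factorial h)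
  rw [div_mul_div_comm, one_mul, div_eq_div_iff] <;>
    [skip; positivity; positivity]
  rw [one_mul, ← key]; ring

noncomputable def psi : PowerSeries ℚ →ₗ[ℚ] PowerSeries ℚ where
  toFun f := PowerSeries.mk fun m =>
    (∑ n ∈ range (m+1), PowerSeries.coeff n f * (Nat.factorial n : ℚ) * stirling2 m n) /
      (Nat.factorial m : ℚ)
  map_add' f g := by
    ext m
    simp only [coeff_mk, map_add, PowerSeries.coeff_mk]
    rw [← add_div, ← sum_add_distrib]
    congr 1
    exact sum_congr rfl fun n _ => by ring
  map_smul' c f := by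
    ext m
    simp only [coeff_mk, map_smul, RingHom.id_apply, PowerSeries.coeff_mk, smul_eq_mul]
    rw [← mul_div_assoc, mul_sum]
    congr 1
    exact sum_congr rfl fun n _ => by ring

lemma coeff_psi (f : PowerSeries ℚ) (m : ℕ) :
    PowerSeries.coeff m (psi f) =
      (∑ n ∈ range (m+1), PowerSeries.coeff n f * (Nat.factorial n : ℚ) * stirling2 m n) /
        (Nat.factorial m : ℚ) := by
  simp only [psi, LinearMap.coe_mk, AddHom.coe_mk]
  exact coeff_mk _ _

lemma psi_mul_X (f : PowerSeries ℚ) : psi (f * X) = psi f * (PowerSeries.exp ℚ - 1) := by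
  ext m
  set c : ℕ → ℚ := fun n => PowerSeries.coeff n f with hc
  have hterm : ∀ j ∈ range m,
      PowerSeries.coeff j (psi f) * PowerSeries.coeff (m - j) (PowerSeries.exp ℚ - 1) =
      ((∑ n ∈ range (j+1), c n * (Nat.factorial n : ℚ) * stirling2 j n) *
        (m.choose j : ℚ)) / (Nat.factorial m : ℚ) := by
    intro j hj
    rw [mem_range] at hj
    have hmj : m - j ≠ 0 := by omega
    have hce : PowerSeries.coeff (m - j) (PowerSeries.exp ℚ - 1) =
        1 / (Nat.factorial (m - j) : ℚ) := by
      simp [PowerSeries.coeff_exp, PowerSeries.coeff_one, hmj]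
    have h1 := one_div_fact_mul (le_of_lt hj)
    rw [hce, coeff_psi]
    set A := ∑ n ∈ range (j+1), c n * (Nat.factorial n : ℚ) * stirling2 j n with hA
    calc A / (Nat.factorial j : ℚ) * (1 / (Nat.factorial (m-j) : ℚ))
        = A * ((1:ℚ)/(Nat.factorial j) * (1/(Nat.factorial (m-j)))) := by ring
      _ = A * ((m.choose j : ℚ) / (Nat.factorial m : ℚ)) := by rw [h1]
      _ = A * (m.choose j : ℚ) / (Nat.factorial m : ℚ) := by ring
  have hR : PowerSeries.coeff m (psi f * (PowerSeries.exp ℚ - 1)) =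
      (∑ j ∈ range m, (∑ n ∈ range (j+1), c n * (Nat.factorial n : ℚ) * stirling2 j n) *
        (m.choose j : ℚ)) / (Nat.factorial m : ℚ) := by
    rw [PowerSeries.coeff_mul, Finset.Nat.sum_antidiagonal_eq_sum_range_succ
      (fun a b => PowerSeries.coeff a (psi f) * PowerSeries.coeff b (PowerSeries.exp ℚ - 1)),
      sum_range_succ]
    have h0 : PowerSeries.coeff (m - m) (PowerSeries.exp ℚ - 1) = 0 := by
      simp [Nat.sub_self, Nat.factorial]
    rw [h0, mul_zero, add_zero, sum_congr rfl hterm, sum_div]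
  have hL : PowerSeries.coeff m (psi (f * X)) =
      (∑ k ∈ range m, c k * (Nat.factorial (k+1) : ℚ) * stirling2 m (k+1)) /
        (Nat.factorial m : ℚ) := by
    rw [coeff_psi,
      sum_range_succ' (fun n => PowerSeries.coeff n (f * X) * (Nat.factorial n : ℚ) * stirling2 m n)]
    congr 1
    have : ∀ k, PowerSeries.coeff (k+1) (f * X) = c k := fun k =>
      PowerSeries.coeff_succ_mul_X k f
    simp [this, PowerSeries.coeff_zero_mul_X]
  rw [hL, hR]
  congr 1
  -- numerator identity
  have hsub : ∀ j ∈ range m,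
      (∑ n ∈ range (j+1), c n * (Nat.factorial n : ℚ) * stirling2 j n) * (m.choose j : ℚ)
      = ∑ n ∈ range m, c n * (Nat.factorial n : ℚ) * stirling2 j n * (m.choose j : ℚ) := by
    intro j hj
    rw [mem_range] at hj
    rw [sum_mul]
    apply sum_subset (range_subset_range.2 (by omega))
    intro n _ hn
    rw [mem_range] at hn
    rw [stirling2_eq_zero j n (by omega)]
    push_cast; ring
  rw [sum_congr rfl hsub, sum_comm]
  apply sum_congr rfl
  intro k hk
  have key : ∑ j ∈ range m, (m.choose j : ℚ) * stirling2 j k = ((k+1) * stirling2 m (k+1) : ℕ) := by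
    rw [← sum_choose_stirling2' m k]
    push_cast; ring_nf
  calc c k * (Nat.factorial (k+1) : ℚ) * stirling2 m (k+1)
      = c k * (Nat.factorial k : ℚ) * (((k+1) * stirling2 m (k+1) : ℕ) : ℚ) := by
        rw [Nat.factorial_succ]; push_cast; ring
    _ = c k * (Nat.factorial k : ℚ) * ∑ j ∈ range m, (m.choose j : ℚ) * stirling2 j k := by rw [key]
    _ = ∑ j ∈ range m, c k * (Nat.factorial k : ℚ) * stirling2 j k * (m.choose j : ℚ) := by
        rw [mul_sum]; exact sum_congr rfl fun j _ => by ring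

lemma psi_mul_X_pow (f : PowerSeries ℚ) (k : ℕ) :
    psi (f * X ^ k) = psi f * (PowerSeries.exp ℚ - 1) ^ k := by
  induction k with
  | zero => simp
  | succ k ih => rw [pow_succ, ← mul_assoc, psi_mul_X, ih, pow_succ, mul_assoc]

lemma psi_egf (a : ℕ → ℚ) :
    psi (egf a) = egf (fun m => ∑ n ∈ range (m+1), a n * stirling2 m n) := by
  ext m
  rw [coeff_psi, coeff_egf]
  congr 1
  apply sum_congr rfl
  intro n _
  rw [coeff_egf, div_mul_cancel₀ _ (by exact_mod_cast n.factorial_ne_zero : (n.factorial : ℚ) ≠ 0)]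

lemma psi_onePlusTPow (x : ℚ) : psi (onePlusTPow x) = expXT x := by
  rw [onePlusTPow, psi_egf]
  ext m
  rw [coeff_egf, expXT, coeff_egf]
  congr 1
  exact sum_falling_stirling2 x m

lemma expXT_eq (y : ℚ) : expXT y = rescale y (PowerSeries.exp ℚ) := by
  ext n
  rw [expXT, coeff_egf, coeff_rescale, PowerSeries.coeff_exp]
  simp [mul_one_div, div_eq_mul_inv]

lemma psi_mul_onePlusXpow (f : PowerSeries ℚ) (L : ℕ) :
    psi (f * (1 + X) ^ L) = psi f * (PowerSeries.exp ℚ) ^ L := by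
  have h1 : (1 + X : PowerSeries ℚ) ^ L
      = ∑ k ∈ range (L+1), (L.choose k : ℕ) • (X : PowerSeries ℚ) ^ k := by
    rw [add_comm, add_pow]
    exact sum_congr rfl fun k _ => by rw [one_pow, mul_one, nsmul_eq_mul, mul_comm]
  have h2 : (PowerSeries.exp ℚ) ^ L
      = ∑ k ∈ range (L+1), (L.choose k : ℕ) • (PowerSeries.exp ℚ - 1) ^ k := by
    have : PowerSeries.exp ℚ = (PowerSeries.exp ℚ - 1) + 1 := by ring
    rw [this, add_pow]
    refine sum_congr rfl fun k _ => by
      rw [one_pow, mul_one, nsmul_eq_mul, mul_comm]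
      congr 2
      ring
  rw [h1, mul_sum, map_sum, h2, mul_sum]
  apply sum_congr rfl
  intro k _
  rw [mul_smul_comm, map_nsmul, psi_mul_X_pow, mul_smul_comm]

lemma rescale_egf (c : ℚ) (a : ℕ → ℚ) :
    rescale c (egf a) = egf (fun m => c ^ m * a m) := by
  ext m
  rw [coeff_rescale, coeff_egf, coeff_egf, mul_div_assoc]

lemma two_mul_egf (a : ℕ → ℚ) : (2 : PowerSeries ℚ) * egf a = egf (fun m => 2 * a m) := by
  have h2 : (2 : PowerSeries ℚ) = C 2 := (map_ofNat (C (R := ℚ)) 2).symm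
  ext m
  rw [h2, PowerSeries.coeff_C_mul, coeff_egf, coeff_egf, mul_div_assoc]

theorem boole_stirling2_eq_euler (L : ℕ) (hL : 0 < L) (x : ℚ) (Bl : ℕ → ℚ) (E : ℕ → ℚ → ℚ)
    (hBl : egf Bl * (1 + (1 + PowerSeries.X) ^ L) = onePlusTPow x)
    (hE : ∀ y : ℚ, egf (fun m => E m y) * (PowerSeries.exp ℚ + 1) = 2 * expXT y)
    (m : ℕ) :
    ∑ n ∈ Finset.range (m + 1), Bl n * (stirling2 m n : ℚ) =
      (1 / 2) * (L : ℚ) ^ m * E m (x / L) := by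
  have hL0 : (L : ℚ) ≠ 0 := Nat.cast_ne_zero.mpr hL.ne'
  set S : ℕ → ℚ := fun m => ∑ n ∈ range (m+1), Bl n * (stirling2 m n : ℚ) with hS
  have hB : egf S * (1 + expXT (L : ℚ)) = expXT x := by
    have h := congrArg psi hBl
    rw [mul_add, mul_one, map_add, psi_mul_onePlusXpow, psi_onePlusTPow, psi_egf,
      exp_pow_eq_rescale_exp, ← expXT_eq] at h
    rw [mul_add, mul_one]
    exact h
  have hres := congrArg (rescale (L : ℚ)) (hE (x / L))
  rw [map_mul, map_add, map_one, rescale_egf, ← expXT_eq, map_mul, map_ofNat,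
    expXT_eq (x / (L:ℚ)), rescale_rescale, div_mul_cancel₀ x hL0, ← expXT_eq] at hres
  -- hres : egf (fun m => L^m * E m (x/L)) * (expXT L + 1) = 2 * expXT x
  have hcan : (expXT (L : ℚ) + 1) ≠ 0 := by
    intro h0
    have := congrArg (PowerSeries.coeff 0) h0
    simp [expXT, egf, PowerSeries.constantCoeff_mk] at this
  have key : egf (fun m => (L:ℚ)^m * E m (x/L)) = 2 * egf S :=
    mul_right_cancel₀ hcan <| by
      calc egf (fun m => (L:ℚ)^m * E m (x/L)) * (expXT (L:ℚ) + 1) = 2 * expXT x := hres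
        _ = 2 * (egf S * (1 + expXT (L:ℚ))) := by rw [hB]
        _ = 2 * egf S * (expXT (L:ℚ) + 1) := by ring
  rw [two_mul_egf] at key
  have hm := congrArg (PowerSeries.coeff m) key
  rw [coeff_egf, coeff_egf, div_eq_div_iff (by exact_mod_cast m.factorial_ne_zero)
    (by exact_mod_cast m.factorial_ne_zero)] at hm
  have hfac : (m.factorial : ℚ) ≠ 0 := by exact_mod_cast m.factorial_ne_zero
  have : (L:ℚ)^m * E m (x/L) = 2 * S m := by
    have := mul_right_cancel₀ hfac hm
    linarith
  show S m = (1/2) * (L:ℚ)^m * E m (x/L)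
  linarith
end

section
/- For λ a positive integer and n ≥ 0, the Boole polynomial satisfies 2 Bl_n(x|λ) = ∑_{l=0}^{n} s(n,l) λ^l E_l(x/λ), where s(n,l) are the signed Stirling numbers of the first kind and E_l the Euler polynomials. -/
open Finset PowerSeries

/-! ### Stirling number lemmas -/

lemma stirling1_of_lt : ∀ {n k : ℕ}, n < k → stirling1 n k = 0 := by
  intro n
  induction n with
  | zero => intro k hk; match k, hk with | (k+1), _ => rfl
  | succ n ih =>
      intro k hk
      match k, hk with
      | (k+1), hk =>
        show n * stirling1 n (k+1) + stirling1 n k = 0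
        rw [ih (by omega), ih (by omega)]
        simp

lemma s1_succ_zero (n : ℕ) : s1 (n + 1) 0 = 0 := by
  simp [s1, show stirling1 (n+1) 0 = 0 from rfl]

lemma s1_of_lt {n k : ℕ} (h : n < k) : s1 n k = 0 := by
  simp [s1, stirling1_of_lt h]

lemma s1_zero_zero : s1 0 0 = 1 := by simp [s1, show stirling1 0 0 = 1 from rfl]

lemma s1_succ_succ (n l : ℕ) : s1 (n + 1) (l + 1) = s1 n l - n * s1 n (l + 1) := by
  rcases le_or_gt (l + 1) n with h | h
  · simp only [s1, show stirling1 (n+1) (l+1) = n * stirling1 n (l+1) + stirling1 n l from rfl]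
    have h1 : n + 1 - (l + 1) = (n - (l+1)) + 1 := by omega
    have h2 : n - l = (n - (l+1)) + 1 := by omega
    rw [h1, h2]
    push_cast
    ring
  · rw [s1_of_lt h]
    rcases Nat.eq_or_lt_of_le (Nat.lt_succ_iff.mp h) with h3 | h3
    · subst h3
      simp only [s1, show stirling1 (n+1) (n+1) = n * stirling1 n (n+1) + stirling1 n n from rfl,
        stirling1_of_lt (Nat.lt_succ_self n)]
      simp
    · rw [s1_of_lt h3, s1_of_lt (by omega : n + 1 < l + 1)]
      simp

lemma n_mul_s1_zero (n : ℕ) : (n : ℚ) * s1 n 0 = 0 := by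
  cases n with
  | zero => simp
  | succ m => rw [s1_succ_zero]; ring

lemma sum_s1_pow (c : ℚ) : ∀ n : ℕ,
    ∑ l ∈ range (n + 1), s1 n l * c ^ l = ∏ i ∈ range n, (c - i) := by
  intro n
  induction n with
  | zero => simp [s1_zero_zero]
  | succ n ih =>
      have h2 : ∑ i ∈ range (n + 1), s1 n (i + 1) * c ^ (i + 1)
          = (∑ l ∈ range (n + 1), s1 n l * c ^ l) - s1 n 0 := by
        have := Finset.sum_range_succ' (fun l => s1 n l * c ^ l) (n + 1)
        rw [Finset.sum_range_succ (fun l => s1 n l * c ^ l) (n + 1),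
          s1_of_lt (Nat.lt_succ_self n)] at this
        simp only [pow_zero, mul_one, zero_mul, add_zero] at this
        linarith [this]
      have h1 : ∑ i ∈ range (n + 1), s1 (n + 1) (i + 1) * c ^ (i + 1)
          = (∑ l ∈ range (n + 1), s1 n l * c ^ l) * c
            - (n : ℚ) * ((∑ l ∈ range (n + 1), s1 n l * c ^ l) - s1 n 0) := by
        rw [← h2]
        rw [Finset.mul_sum, Finset.sum_mul, ← Finset.sum_sub_distrib]
        apply Finset.sum_congr rfl
        intro i _
        rw [s1_succ_succ]
        ring
      rw [prod_range_succ, ← ih, Finset.sum_range_succ' _ (n + 1), s1_succ_zero, h1]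
      have := n_mul_s1_zero n
      nlinarith [this]

lemma prod_sub_nat (L : ℕ) (n : ℕ) :
    ∏ i ∈ range n, ((L : ℚ) - i) = (n.factorial : ℚ) * (L.choose n) := by
  induction n with
  | zero => simp
  | succ n ih =>
      rw [prod_range_succ, ih, Nat.factorial_succ]
      rcases le_or_gt (n + 1) L with h | h
      · have key : (L.choose (n+1) * (n+1) : ℕ) = (L.choose n * (L - n) : ℕ) :=
          Nat.choose_succ_right_eq L n
        have hc : ((L - n : ℕ) : ℚ) = (L : ℚ) - n := by
          have : n ≤ L := by omega
          push_cast [this]; ring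
        have := congrArg (fun m : ℕ => (m : ℚ)) key
        push_cast at this
        rw [hc] at this
        push_cast
        nlinarith [this]
      · rcases Nat.eq_or_lt_of_le (Nat.lt_succ_iff.mp h) with h3 | h3
        · rw [← h3]
          simp [Nat.choose_succ_self]
        · rw [Nat.choose_eq_zero_of_lt h3, Nat.choose_eq_zero_of_lt (by omega)]
          simp

/-! ### The series `σ = L log(1+t)` and its powers -/

noncomputable def sig (L : ℕ) : PowerSeries ℚ :=
  PowerSeries.mk fun n => if n = 0 then 0 else (L : ℚ) * (-1) ^ (n + 1) / n

lemma constantCoeff_sig (L : ℕ) : constantCoeff (sig L) = 0 := by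
  rw [← coeff_zero_eq_constantCoeff]
  simp [sig, coeff_mk]

lemma coeff_derivativeFun' (f : ℚ⟦X⟧) (n : ℕ) :
    coeff n (derivativeFun f) = coeff (n + 1) f * (n + 1) := coeff_derivative f n

lemma one_add_X_mul_dsig (L : ℕ) :
    (1 + X) * derivativeFun (sig L) = C (L : ℚ) := by
  ext n
  rw [add_mul, one_mul, map_add]
  cases n with
  | zero =>
      rw [coeff_zero_X_mul, coeff_derivativeFun']
      simp [sig, coeff_mk, coeff_zero_C]
  | succ n =>
      rw [coeff_succ_X_mul, coeff_derivativeFun', coeff_derivativeFun']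
      simp only [sig, coeff_mk, coeff_C]
      have h1 : (n + 1 + 1 : ℕ) ≠ 0 := by omega
      have h2 : (n + 1 : ℕ) ≠ 0 := by omega
      rw [if_neg h1, if_neg h2, if_neg (by omega : ¬ (n + 1 = 0))]
      have c1 : ((n + 1 + 1 : ℕ) : ℚ) ≠ 0 := by positivity
      have c2 : ((n + 1 : ℕ) : ℚ) ≠ 0 := by positivity
      field_simp
      push_cast
      ring

lemma dpow (f : ℚ⟦X⟧) : ∀ l : ℕ,
    derivativeFun (f ^ (l + 1)) = (C ((l : ℚ) + 1)) * (f ^ l * derivativeFun f) := by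
  intro l
  induction l with
  | zero => simp
  | succ l ih =>
      rw [pow_succ f (l + 1), derivativeFun_mul, ih]
      have hC : C ((l : ℚ) + 1 + 1) = C ((l : ℚ) + 1) + 1 := by
        rw [map_add, map_one]
      push_cast
      rw [hC, smul_eq_mul, smul_eq_mul]
      ring

lemma key (L l : ℕ) : (1 + X) * derivativeFun ((sig L) ^ (l + 1))
    = C (((l : ℚ) + 1) * L) * (sig L) ^ l := by
  rw [dpow, map_mul]
  calc (1 + X) * (C ((l : ℚ) + 1) * ((sig L) ^ l * derivativeFun (sig L)))
      = C ((l : ℚ) + 1) * (sig L) ^ l * ((1 + X) * derivativeFun (sig L)) := by ring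
    _ = C ((l : ℚ) + 1) * C ((L : ℚ)) * (sig L) ^ l := by rw [one_add_X_mul_dsig]; ring

lemma coeff_sig_pow (L : ℕ) : ∀ l n : ℕ, coeff n ((sig L) ^ l)
    = (Nat.factorial l : ℚ) * s1 n l * (L : ℚ) ^ l / (Nat.factorial n : ℚ) := by
  intro l
  induction l with
  | zero =>
      intro n
      cases n with
      | zero => simp [coeff_one, s1_zero_zero]
      | succ m => simp [coeff_one, s1_succ_zero]
  | succ l ihl =>
      intro n
      induction n with
      | zero =>
          rw [coeff_zero_eq_constantCoeff, map_pow, constantCoeff_sig,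
            zero_pow (by omega : l + 1 ≠ 0), s1_of_lt (by omega : 0 < l + 1)]
          simp
      | succ n ihn =>
          have hk := congrArg (coeff n) (key L l)
          rw [add_mul, one_mul, map_add, coeff_derivativeFun', coeff_C_mul] at hk
          have hx : coeff n (X * derivativeFun ((sig L) ^ (l + 1)))
              = coeff n ((sig L) ^ (l + 1)) * n := by
            cases n with
            | zero => simp
            | succ m => rw [coeff_succ_X_mul, coeff_derivativeFun']; push_cast; ring
          rw [hx, ihl n, ihn] at hk
          have hne : ((n : ℚ) + 1) ≠ 0 := by positivity
          apply mul_right_cancel₀ hne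
          have hA : coeff (n + 1) ((sig L) ^ (l + 1)) * ((n : ℚ) + 1)
              = ((l : ℚ) + 1) * L * ((l.factorial : ℚ) * s1 n l * (L : ℚ) ^ l / (n.factorial : ℚ))
                - ((l + 1).factorial : ℚ) * s1 n (l + 1) * (L : ℚ) ^ (l + 1) / (n.factorial : ℚ) * n := by
            push_cast at hk ⊢
            linarith [hk]
          rw [hA, s1_succ_succ]
          have h1 : ((n + 1).factorial : ℚ) = ((n : ℚ) + 1) * (n.factorial : ℚ) := by
            rw [Nat.factorial_succ]; push_cast; ring
          have h2 : ((l + 1).factorial : ℚ) = ((l : ℚ) + 1) * (l.factorial : ℚ) := by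
            rw [Nat.factorial_succ]; push_cast; ring
          rw [h1, h2]
          have hfn' : (n.factorial : ℚ) ≠ 0 := by
            exact_mod_cast Nat.cast_ne_zero.mpr (Nat.factorial_ne_zero n)
          field_simp
          ring

lemma coeff_sig_pow_of_lt (L : ℕ) {l n : ℕ} (h : n < l) : coeff n ((sig L) ^ l) = 0 := by
  rw [coeff_sig_pow, s1_of_lt h]
  simp

/-! ### Composition with σ -/

noncomputable def comp (L : ℕ) (F : ℚ⟦X⟧) : ℚ⟦X⟧ :=
  PowerSeries.mk fun n => ∑ l ∈ range (n + 1), coeff l F * coeff n ((sig L) ^ l)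

lemma coeff_comp (L : ℕ) (F : ℚ⟦X⟧) (n : ℕ) :
    coeff n (comp L F) = ∑ l ∈ range (n + 1), coeff l F * coeff n ((sig L) ^ l) :=
  coeff_mk _ _

lemma tri_sum (t : ℕ → ℕ → ℚ) (n : ℕ) :
    ∑ l ∈ range (n + 1), ∑ i ∈ range (l + 1), t i (l - i)
      = ∑ a ∈ range (n + 1), ∑ b ∈ range (n + 1 - a), t a b := by
  induction n with
  | zero => simp
  | succ n ih =>
      rw [Finset.sum_range_succ _ (n + 1), ih]
      rw [Finset.sum_range_succ (fun a => ∑ b ∈ range (n + 2 - a), t a b) (n + 1)]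
      have h1 : ∀ a ∈ range (n + 1), ∑ b ∈ range (n + 2 - a), t a b
          = (∑ b ∈ range (n + 1 - a), t a b) + t a (n + 1 - a) := by
        intro a ha
        rw [Finset.mem_range] at ha
        have : n + 2 - a = (n + 1 - a) + 1 := by omega
        rw [this, Finset.sum_range_succ]
      rw [Finset.sum_congr rfl h1, Finset.sum_add_distrib]
      have h2 : ∑ i ∈ range (n + 2), t i (n + 1 - i)
          = (∑ i ∈ range (n + 1), t i (n + 1 - i)) + t (n + 1) 0 := by
        rw [Finset.sum_range_succ]
        simp
      rw [h2]
      have h3 : n + 2 - (n + 1) = 1 := by omega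
      rw [h3]
      simp [Finset.sum_range_one]
      ring

lemma comp_mul (L : ℕ) (F G : ℚ⟦X⟧) :
    comp L (F * G) = comp L F * comp L G := by
  ext n
  rw [coeff_comp, coeff_mul]
  rw [Finset.Nat.sum_antidiagonal_eq_sum_range_succ_mk]
  have hL : ∑ l ∈ range (n + 1), coeff l (F * G) * coeff n ((sig L) ^ l)
      = ∑ a ∈ range (n + 1), ∑ b ∈ range (n + 1),
          coeff a F * coeff b G * coeff n ((sig L) ^ (a + b)) := by
    have e1 : ∀ l ∈ range (n + 1), coeff l (F * G) * coeff n ((sig L) ^ l)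
        = ∑ i ∈ range (l + 1), coeff i F * coeff (l - i) G
            * coeff n ((sig L) ^ (i + (l - i))) := by
      intro l hl
      rw [coeff_mul, Finset.Nat.sum_antidiagonal_eq_sum_range_succ_mk, Finset.sum_mul]
      apply Finset.sum_congr rfl
      intro i hi
      rw [Finset.mem_range] at hi
      have : i + (l - i) = l := by omega
      rw [this]
    rw [Finset.sum_congr rfl e1,
      tri_sum (fun a b => coeff a F * coeff b G * coeff n ((sig L) ^ (a + b))) n]
    apply Finset.sum_congr rfl
    intro a ha
    rw [Finset.mem_range] at ha
    apply Finset.sum_subset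
    · intro b hb
      rw [Finset.mem_range] at hb ⊢
      omega
    · intro b hb hb2
      rw [Finset.mem_range] at hb hb2
      rw [coeff_sig_pow_of_lt L (by omega : n < a + b)]
      ring
  rw [hL]
  have hR : ∑ k ∈ range (n + 1), coeff k (comp L F) * coeff (n - k) (comp L G)
      = ∑ a ∈ range (n + 1), ∑ b ∈ range (n + 1),
          coeff a F * coeff b G * coeff n ((sig L) ^ (a + b)) := by
    have e2 : ∀ k ∈ range (n + 1), coeff k (comp L F) * coeff (n - k) (comp L G)
        = ∑ a ∈ range (n + 1), ∑ b ∈ range (n + 1),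
            coeff a F * coeff b G * (coeff k ((sig L) ^ a) * coeff (n - k) ((sig L) ^ b)) := by
      intro k hk
      rw [Finset.mem_range] at hk
      rw [coeff_comp, coeff_comp]
      have eF : ∑ l ∈ range (k + 1), coeff l F * coeff k ((sig L) ^ l)
          = ∑ l ∈ range (n + 1), coeff l F * coeff k ((sig L) ^ l) := by
        apply Finset.sum_subset
        · intro b hb; rw [Finset.mem_range] at hb ⊢; omega
        · intro b hb hb2
          rw [Finset.mem_range] at hb hb2
          rw [coeff_sig_pow_of_lt L (by omega : k < b)]; ring
      have eG : ∑ l ∈ range (n - k + 1), coeff l G * coeff (n - k) ((sig L) ^ l)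
          = ∑ l ∈ range (n + 1), coeff l G * coeff (n - k) ((sig L) ^ l) := by
        apply Finset.sum_subset
        · intro b hb; rw [Finset.mem_range] at hb ⊢; omega
        · intro b hb hb2
          rw [Finset.mem_range] at hb hb2
          rw [coeff_sig_pow_of_lt L (by omega : n - k < b)]; ring
      rw [eF, eG, Finset.sum_mul_sum]
      apply Finset.sum_congr rfl; intro a _
      apply Finset.sum_congr rfl; intro b _
      ring
    rw [Finset.sum_congr rfl e2, Finset.sum_comm]
    apply Finset.sum_congr rfl
    intro a _
    rw [Finset.sum_comm]
    apply Finset.sum_congr rfl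
    intro b _
    rw [← Finset.mul_sum]
    congr 1
    rw [pow_add, coeff_mul, Finset.Nat.sum_antidiagonal_eq_sum_range_succ_mk]
  rw [hR]

lemma comp_one (L : ℕ) : comp L 1 = 1 := by
  ext n
  rw [coeff_comp]
  rw [Finset.sum_eq_single 0]
  · simp
  · intro l _ hl
    rw [coeff_one, if_neg hl]
    ring
  · intro h
    exact absurd (Finset.mem_range.mpr (by omega)) h

lemma comp_add (L : ℕ) (F G : ℚ⟦X⟧) : comp L (F + G) = comp L F + comp L G := by
  ext n
  simp only [coeff_comp, map_add, add_mul, Finset.sum_add_distrib]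

lemma comp_C_mul (L : ℕ) (a : ℚ) (F : ℚ⟦X⟧) : comp L (C a * F) = C a * comp L F := by
  ext n
  simp only [coeff_comp, coeff_C_mul, Finset.mul_sum, mul_assoc]

/-! ### Composition of specific series -/

lemma coeff_one_add_X_pow (L n : ℕ) : coeff n ((1 + X) ^ L) = (L.choose n : ℚ) := by
  rw [add_comm (1 : ℚ⟦X⟧) X, add_pow, map_sum]
  have e : ∀ k ∈ range (L + 1),
      coeff n (X ^ k * 1 ^ (L - k) * ((L.choose k : ℕ) : ℚ⟦X⟧))
        = if k = n then (L.choose k : ℚ) else 0 := by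
    intro k _
    rw [one_pow, mul_one, show ((L.choose k : ℕ) : ℚ⟦X⟧) = C ((L.choose k : ℕ) : ℚ) from
      (map_natCast C (L.choose k)).symm, coeff_mul_C, coeff_X_pow]
    by_cases h : n = k
    · subst h; simp
    · rw [if_neg h, if_neg (fun hh => h hh.symm)]; ring
  rw [Finset.sum_congr rfl e, Finset.sum_ite_eq' (range (L + 1)) n fun k => (L.choose k : ℚ)]
  by_cases h : n ∈ range (L + 1)
  · rw [if_pos h]
  · rw [if_neg h]
    rw [Finset.mem_range] at h
    rw [Nat.choose_eq_zero_of_lt (by omega)]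
    simp

lemma comp_exp (L : ℕ) : comp L (PowerSeries.exp ℚ) = (1 + X) ^ L := by
  ext n
  rw [coeff_comp, coeff_one_add_X_pow]
  have e : ∀ l ∈ range (n + 1),
      coeff l (PowerSeries.exp ℚ) * coeff n ((sig L) ^ l)
        = s1 n l * (L : ℚ) ^ l / (n.factorial : ℚ) := by
    intro l _
    rw [PowerSeries.coeff_exp, coeff_sig_pow]
    have hfl : (l.factorial : ℚ) ≠ 0 := by
      exact_mod_cast Nat.cast_ne_zero.mpr (Nat.factorial_ne_zero l)
    simp only [eq_ratCast, Rat.cast_eq_id, id_eq]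
    field_simp
  rw [Finset.sum_congr rfl e, ← Finset.sum_div, sum_s1_pow ((L : ℚ)) n, prod_sub_nat]
  have hfn : (n.factorial : ℚ) ≠ 0 := by
    exact_mod_cast Nat.cast_ne_zero.mpr (Nat.factorial_ne_zero n)
  field_simp

lemma comp_expXT (L : ℕ) (y : ℚ) : comp L (expXT y) = onePlusTPow ((L : ℚ) * y) := by
  ext n
  rw [coeff_comp]
  have e : ∀ l ∈ range (n + 1),
      coeff l (expXT y) * coeff n ((sig L) ^ l)
        = s1 n l * ((L : ℚ) * y) ^ l / (n.factorial : ℚ) := by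
    intro l _
    rw [show coeff l (expXT y) = y ^ l / (l.factorial : ℚ) by simp [expXT, egf, coeff_mk], coeff_sig_pow]
    have hfl : (l.factorial : ℚ) ≠ 0 := by
      exact_mod_cast Nat.cast_ne_zero.mpr (Nat.factorial_ne_zero l)
    rw [mul_pow]
    field_simp
  rw [Finset.sum_congr rfl e, ← Finset.sum_div, sum_s1_pow ((L : ℚ) * y) n]
  simp [onePlusTPow, egf, coeff_mk]

lemma comp_egf (L : ℕ) (u : ℕ → ℚ) :
    comp L (egf u) = egf (fun n => ∑ l ∈ range (n + 1), s1 n l * (L : ℚ) ^ l * u l) := by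
  ext n
  rw [coeff_comp, show coeff n (egf fun n => ∑ l ∈ range (n + 1), s1 n l * (L : ℚ) ^ l * u l)
    = (∑ l ∈ range (n + 1), s1 n l * (L : ℚ) ^ l * u l) / (n.factorial : ℚ)
      by simp [egf, coeff_mk],
    Finset.sum_div]
  apply Finset.sum_congr rfl
  intro l _
  rw [show coeff l (egf u) = u l / (l.factorial : ℚ) by simp [egf, coeff_mk], coeff_sig_pow]
  have hfl : (l.factorial : ℚ) ≠ 0 := by
    exact_mod_cast Nat.cast_ne_zero.mpr (Nat.factorial_ne_zero l)
  field_simp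

/-! ### Main theorem -/

theorem two_boole_eq_sum_stirling1_euler (L : ℕ) (hL : 0 < L) (x : ℚ)
    (Bl : ℕ → ℚ) (E : ℕ → ℚ → ℚ)
    (hBl : egf Bl * (1 + (1 + PowerSeries.X) ^ L) = onePlusTPow x)
    (hE : ∀ y : ℚ, egf (fun m => E m y) * (PowerSeries.exp ℚ + 1) = 2 * expXT y)
    (n : ℕ) :
    2 * Bl n = ∑ l ∈ Finset.range (n + 1), s1 n l * (L : ℚ) ^ l * E l (x / L) := by
  have hLQ : (L : ℚ) ≠ 0 := by positivity
  set y := x / L with hy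
  have h0 := congrArg (comp L) (hE y)
  rw [comp_mul, comp_add, comp_one, comp_exp, comp_egf,
    show (2 : ℚ⟦X⟧) * expXT y = C 2 * expXT y by rw [map_ofNat],
    comp_C_mul, comp_expXT] at h0
  have hxy : (L : ℚ) * y = x := by
    rw [hy]; field_simp
  rw [hxy] at h0
  -- h0 : egf T * ((1+X)^L + 1) = C 2 * onePlusTPow x
  set T : ℕ → ℚ := fun n => ∑ l ∈ range (n + 1), s1 n l * (L : ℚ) ^ l * E l y with hT
  have hU : (1 + (1 + X : ℚ⟦X⟧) ^ L) ≠ 0 := by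
    intro h
    have := congrArg (constantCoeff) h
    rw [map_add, map_one, map_pow, map_add, map_one, constantCoeff_X, add_zero, one_pow,
      map_zero] at this
    norm_num at this
  have h1 : (C 2 * egf Bl) * (1 + (1 + X : ℚ⟦X⟧) ^ L) = egf T * (1 + (1 + X : ℚ⟦X⟧) ^ L) := by
    rw [mul_assoc, hBl, ← h0]
    ring
  have h2 : C 2 * egf Bl = egf T := mul_right_cancel₀ hU h1
  have h3 := congrArg (coeff n) h2
  rw [coeff_C_mul, show coeff n (egf Bl) = Bl n / (n.factorial : ℚ) by simp [egf, coeff_mk],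
    show coeff n (egf T) = T n / (n.factorial : ℚ) by simp [egf, coeff_mk]] at h3
  have hfn : (n.factorial : ℚ) ≠ 0 := by
    exact_mod_cast Nat.cast_ne_zero.mpr (Nat.factorial_ne_zero n)
  have : 2 * Bl n = T n := by
    field_simp at h3
    linarith [h3]
  rw [this, hT]
end

section
/- For k ≥ 1, λ a positive integer, and m ≥ 0, the order-k Boole polynomials of the second kind satisfy B̂l_m^{(k)}(x|λ) = ∑_{l=0}^{m} s(m,l) (-1)^l (λ^l/2^k) E_l^{(k)}(-x/λ). -/
open Finset PowerSeries

lemma stirling1_eq_zero : ∀ {n l : ℕ}, n < l → stirling1 n l = 0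
  | 0, 0, h => absurd h (by omega)
  | 0, _ + 1, _ => rfl
  | n + 1, 0, h => absurd h (by omega)
  | n + 1, l + 1, h => by
    rw [stirling1, stirling1_eq_zero (by omega), stirling1_eq_zero (by omega)]
    simp

lemma s1_eq_zero {n l : ℕ} (h : n < l) : s1 n l = 0 := by
  simp [s1, stirling1_eq_zero h]

lemma s1_zero_right (m : ℕ) : s1 (m + 1) 0 = 0 := by
  simp [s1, stirling1]

lemma s1_rec (m l : ℕ) : s1 (m + 1) (l + 1) = s1 m l - m * s1 m (l + 1) := by
  have hst : stirling1 (m + 1) (l + 1) = m * stirling1 m (l + 1) + stirling1 m l := rfl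
  rcases le_or_gt l m with h | h
  · rcases eq_or_lt_of_le h with rfl | h'
    · simp [s1, hst, stirling1_eq_zero (show l < l + 1 by omega)]
    · simp only [s1, hst]
      rw [show m + 1 - (l + 1) = (m - (l + 1)) + 1 by omega,
          show m - l = (m - (l + 1)) + 1 by omega]
      push_cast
      ring
  · rw [s1_eq_zero (by omega), s1_eq_zero (by omega), s1_eq_zero (by omega)]
    ring

/-- Falling factorial expansion via signed Stirling numbers. -/
lemma sum_s1_mul_pow (z : ℚ) : ∀ m : ℕ,
    ∑ l ∈ Finset.range (m + 1), s1 m l * z ^ l = ∏ i ∈ Finset.range m, (z - i)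
  | 0 => by simp [s1, stirling1]
  | m + 1 => by
    rw [Finset.prod_range_succ, ← sum_s1_mul_pow z m]
    rw [Finset.sum_range_succ' (fun l => s1 (m + 1) l * z ^ l) (m + 1)]
    simp only [s1_zero_right, s1_rec, pow_zero, mul_one, zero_add]
    have h1 : ∑ l ∈ Finset.range (m + 1), (s1 m l - m * s1 m (l + 1)) * z ^ (l + 1)
        = (∑ l ∈ Finset.range (m + 1), s1 m l * z ^ l) * z
          - m * ∑ l ∈ Finset.range (m + 1), s1 m (l + 1) * z ^ (l + 1) := by
      rw [Finset.sum_mul, Finset.mul_sum, ← Finset.sum_sub_distrib]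
      congr 1 with l
      ring
    rw [h1]
    have h2 : (m : ℚ) * ∑ l ∈ Finset.range (m + 1), s1 m (l + 1) * z ^ (l + 1)
        = m * ∑ l ∈ Finset.range (m + 1), s1 m l * z ^ l := by
      rcases Nat.eq_zero_or_pos m with rfl | hm
      · simp
      · congr 1
        rw [Finset.sum_range_succ' (fun l => s1 m l * z ^ l) m]
        rw [Finset.sum_range_succ (fun l => s1 m (l + 1) * z ^ (l + 1)) m]
        rw [s1_eq_zero (by omega)]
        have : s1 m 0 = 0 := by
          cases m with
          | zero => omega
          | succ m' => exact s1_zero_right m'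
        simp [this]
    rw [h2]
    ring




/-- Pascal identity for falling factorials. -/
lemma prod_sub_succ (z : ℚ) (m : ℕ) :
    ∏ i ∈ Finset.range (m + 1), (z + 1 - i) =
      ∏ i ∈ Finset.range (m + 1), (z - i) + (m + 1) * ∏ i ∈ Finset.range m, (z - i) := by
  rw [Finset.prod_range_succ' (fun i => z + 1 - (i : ℚ)) m, Finset.prod_range_succ]
  have h : ∀ i ∈ Finset.range m, z + 1 - (((i + 1 : ℕ) : ℚ)) = z - i := by
    intro i _; push_cast; ring
  rw [Finset.prod_congr rfl h]
  push_cast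
  ring

lemma coeff_one_add_X_mul (F : PowerSeries ℚ) (n : ℕ) :
    PowerSeries.coeff n ((1 + PowerSeries.X) * F) =
      PowerSeries.coeff n F + if n = 0 then 0 else PowerSeries.coeff (n - 1) F := by
  rw [add_mul, one_mul, map_add]
  cases n with
  | zero => simp [PowerSeries.coeff_zero_X_mul]
  | succ n => simp [PowerSeries.coeff_succ_X_mul]

lemma onePlusTPow_succ (w : ℚ) :
    onePlusTPow (w + 1) = (1 + PowerSeries.X) * onePlusTPow w := by
  ext n
  rw [coeff_one_add_X_mul]
  simp only [onePlusTPow, coeff_egf]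
  cases n with
  | zero => simp
  | succ n =>
    simp only [Nat.succ_ne_zero, if_false, Nat.add_sub_cancel]
    have h : ∀ i ∈ Finset.range (n + 1), (w + 1 - (i:ℚ)) = (w + 1 - (i:ℚ)) := fun _ _ => rfl
    rw [prod_sub_succ w n]
    have hfac : ((n + 1).factorial : ℚ) = (n + 1) * (n.factorial : ℚ) := by
      push_cast [Nat.factorial_succ]; ring
    rw [hfac]
    have h1 : (n.factorial : ℚ) ≠ 0 := Nat.cast_ne_zero.mpr (Nat.factorial_ne_zero n)
    have h2 : ((n : ℚ) + 1) ≠ 0 := by positivity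
    field_simp

lemma onePlusTPow_zero : onePlusTPow 0 = 1 := by
  ext n
  simp only [onePlusTPow, coeff_egf, PowerSeries.coeff_one]
  cases n with
  | zero => simp
  | succ n =>
    rw [Finset.prod_eq_zero (Finset.mem_range.mpr (Nat.succ_pos n))]
    · simp
    · simp

lemma onePlusTPow_add_nat (x : ℚ) : ∀ n : ℕ,
    onePlusTPow (x + n) = (1 + PowerSeries.X) ^ n * onePlusTPow x
  | 0 => by simp
  | n + 1 => by
    have : x + ((n : ℚ) + 1) = (x + n) + 1 := by ring
    push_cast
    rw [this, onePlusTPow_succ, onePlusTPow_add_nat x n, pow_succ]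
    ring

lemma onePlusTPow_natCast (n : ℕ) :
    onePlusTPow (n : ℚ) = (1 + PowerSeries.X) ^ n := by
  have := onePlusTPow_add_nat 0 n
  rw [zero_add] at this
  rw [this, onePlusTPow_zero, mul_one]

lemma coeff_egf_mul_expXT (a : ℕ → ℚ) (z : ℚ) (l : ℕ) :
    PowerSeries.coeff l (egf a * expXT z) =
      (∑ i ∈ Finset.range (l + 1), (l.choose i : ℚ) * a i * z ^ (l - i)) / (l.factorial : ℚ) := by
  rw [PowerSeries.coeff_mul, Finset.Nat.sum_antidiagonal_eq_sum_range_succ_mk, Finset.sum_div]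
  refine Finset.sum_congr rfl fun i hi => ?_
  have hil : i ≤ l := Nat.lt_succ_iff.mp (Finset.mem_range.mp hi)
  simp only [expXT, coeff_egf]
  rw [Nat.cast_choose ℚ hil]
  have h1 : (i.factorial : ℚ) ≠ 0 := Nat.cast_ne_zero.mpr (Nat.factorial_ne_zero _)
  have h2 : ((l - i).factorial : ℚ) ≠ 0 := Nat.cast_ne_zero.mpr (Nat.factorial_ne_zero _)
  have h3 : (l.factorial : ℚ) ≠ 0 := Nat.cast_ne_zero.mpr (Nat.factorial_ne_zero _)
  field_simp

lemma expXT_eq_egf (z : ℚ) : expXT z = egf fun n => z ^ n := rfl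

lemma expXT_mul (a b : ℚ) : expXT a * expXT b = expXT (a + b) := by
  ext l
  rw [show expXT a = egf fun n => a ^ n from rfl, coeff_egf_mul_expXT]
  rw [show expXT (a + b) = egf fun n => (a + b) ^ n from rfl, coeff_egf]
  rw [add_pow]
  congr 1
  refine Finset.sum_congr rfl fun i _ => ?_
  ring

lemma expXT_zero : expXT 0 = 1 := by
  ext n
  simp only [expXT, coeff_egf, PowerSeries.coeff_one]
  cases n with
  | zero => simp
  | succ n => simp [Nat.factorial_ne_zero]

lemma exp_eq_expXT : PowerSeries.exp ℚ = expXT 1 := by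
  ext n
  simp [PowerSeries.coeff_exp, expXT, coeff_egf]

lemma exp_pow_eq_expXT : ∀ j : ℕ, (PowerSeries.exp ℚ) ^ j = expXT (j : ℚ)
  | 0 => by simp [expXT_zero]
  | j + 1 => by
    rw [pow_succ, exp_pow_eq_expXT j, exp_eq_expXT, expXT_mul]
    push_cast
    ring_nf


noncomputable def Lg : PowerSeries ℚ :=
  PowerSeries.mk fun m => if m = 0 then 0 else (-1) ^ (m + 1) / m

noncomputable def Sst (l : ℕ) : PowerSeries ℚ := egf fun m => s1 m l

lemma one_add_X_ne_zero : (1 + PowerSeries.X : PowerSeries ℚ) ≠ 0 := by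
  intro h
  have := congrArg (PowerSeries.constantCoeff) h
  simp at this

lemma one_add_X_mul_derivative_Lg :
    (1 + PowerSeries.X) * PowerSeries.derivative ℚ Lg = 1 := by
  ext n
  rw [coeff_one_add_X_mul, PowerSeries.coeff_derivative, PowerSeries.coeff_one]
  cases n with
  | zero => simp [Lg]
  | succ n =>
    rw [PowerSeries.coeff_derivative]
    simp only [Lg, PowerSeries.coeff_mk, Nat.succ_ne_zero, if_false, Nat.add_sub_cancel]
    have h1 : ((n : ℚ) + 1) ≠ 0 := by positivity
    have h2 : ((n : ℚ) + 1 + 1) ≠ 0 := by positivity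
    push_cast
    field_simp
    ring

lemma one_add_X_mul_derivative_Sst (l : ℕ) :
    (1 + PowerSeries.X) * PowerSeries.derivative ℚ (Sst (l + 1)) = Sst l := by
  ext n
  rw [coeff_one_add_X_mul]
  cases n with
  | zero =>
    rw [PowerSeries.coeff_derivative]
    simp only [Sst, coeff_egf, if_pos rfl, add_zero]
    rw [s1_rec]
    simp
  | succ n =>
    rw [PowerSeries.coeff_derivative]
    simp only [Nat.succ_ne_zero, if_false, Nat.add_sub_cancel]
    rw [PowerSeries.coeff_derivative]
    simp only [Sst, coeff_egf]
    have h1 : ((n + 1).factorial : ℚ) = (n + 1) * (n.factorial : ℚ) := by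
      push_cast [Nat.factorial_succ]; ring
    have h2 : ((n + 2).factorial : ℚ) = (n + 2) * ((n + 1).factorial : ℚ) := by
      push_cast [Nat.factorial_succ]; ring
    rw [s1_rec (n + 1) l]
    have h3 : (n.factorial : ℚ) ≠ 0 := Nat.cast_ne_zero.mpr (Nat.factorial_ne_zero _)
    have h5 : ((n : ℚ) + 1) ≠ 0 := by positivity
    have h6 : ((n : ℚ) + 2) ≠ 0 := by positivity
    rw [show n + 1 + 1 = n + 2 from rfl, h2, h1]
    push_cast
    field_simp
    ring

lemma Lg_pow_eq (l : ℕ) : Lg ^ l = (l.factorial : ℚ) • Sst l := by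
  induction l with
  | zero =>
    ext n
    rw [PowerSeries.coeff_smul]
    simp only [pow_zero, Nat.factorial_zero, Nat.cast_one, one_mul, Sst, coeff_egf]
    rw [PowerSeries.coeff_one]
    cases n with
    | zero => simp [s1, stirling1]
    | succ n => simp [s1_zero_right]
  | succ l ih =>
    apply PowerSeries.derivative.ext
    · apply mul_left_cancel₀ one_add_X_ne_zero
      have hfac : (((l + 1).factorial : ℕ) : ℚ) = ((l : ℚ) + 1) * (l.factorial : ℚ) := by
        push_cast [Nat.factorial_succ]; ring
      have hL : (1 + PowerSeries.X) * PowerSeries.derivative ℚ (Lg ^ (l + 1))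
          = ((l + 1).factorial : ℚ) • Sst l := by
        rw [Derivation.leibniz_pow, Nat.add_sub_cancel, ih, smul_eq_mul,
          ← Nat.cast_smul_eq_nsmul ℚ (l + 1), PowerSeries.smul_eq_C_mul,
          PowerSeries.smul_eq_C_mul, PowerSeries.smul_eq_C_mul, hfac, map_mul]
        push_cast
        linear_combination (PowerSeries.C ((l : ℚ) + 1) * PowerSeries.C (l.factorial : ℚ)
          * Sst l) * one_add_X_mul_derivative_Lg
      rw [hL, Derivation.map_smul, mul_smul_comm, one_add_X_mul_derivative_Sst]
    · rw [map_pow]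
      have h0 : PowerSeries.constantCoeff Lg = 0 := by simp [Lg]
      rw [h0, zero_pow (Nat.succ_ne_zero l), PowerSeries.constantCoeff_smul]
      simp only [Sst, egf, PowerSeries.constantCoeff_mk]
      rw [s1_eq_zero (Nat.succ_pos l)]
      simp

lemma Sst_mul (a b : ℕ) :
    Sst a * Sst b = (((a + b).choose a : ℕ) : ℚ) • Sst (a + b) := by
  have h1 : Lg ^ (a + b) = Lg ^ a * Lg ^ b := pow_add _ _ _
  rw [Lg_pow_eq, Lg_pow_eq, Lg_pow_eq, smul_mul_smul_comm] at h1
  have ha : ((a.factorial : ℚ) * b.factorial) ≠ 0 := by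
    have := Nat.factorial_ne_zero a
    have := Nat.factorial_ne_zero b
    positivity
  have h2 := congrArg (fun F => ((a.factorial : ℚ) * b.factorial)⁻¹ • F) h1
  simp only [smul_smul, inv_mul_cancel₀ ha, one_smul] at h2
  rw [← h2]
  congr 1
  rw [Nat.cast_choose ℚ (Nat.le_add_right a b), Nat.add_sub_cancel_left]
  field_simp

def Tc (u : ℚ) (a : ℕ → ℚ) : ℕ → ℚ := fun m =>
  ∑ l ∈ Finset.range (m + 1), s1 m l * u ^ l * a l

lemma coeff_Sst_eq_zero {m l : ℕ} (h : m < l) : PowerSeries.coeff m (Sst l) = 0 := by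
  simp [Sst, coeff_egf, s1_eq_zero h]

lemma egf_Tc_approx (u : ℚ) (a : ℕ → ℚ) (N : ℕ) :
    (PowerSeries.X : PowerSeries ℚ) ^ (N + 1) ∣
      egf (Tc u a) - ∑ l ∈ Finset.range (N + 1), (a l * u ^ l) • Sst l := by
  rw [PowerSeries.X_pow_dvd_iff]
  intro m hm
  rw [map_sub, map_sum]
  simp only [PowerSeries.coeff_smul]
  have h1 : PowerSeries.coeff m (egf (Tc u a))
      = ∑ l ∈ Finset.range (m + 1), (a l * u ^ l) * PowerSeries.coeff m (Sst l) := by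
    rw [coeff_egf, Tc, Finset.sum_div]
    refine Finset.sum_congr rfl fun l _ => ?_
    rw [Sst, coeff_egf]
    ring
  rw [h1]
  rw [Finset.sum_subset (Finset.range_subset_range.mpr (by omega : m + 1 ≤ N + 1))]
  · simp
  · intro l hl hl'
    rw [coeff_Sst_eq_zero (by simp at hl hl'; omega)]
    ring

lemma coeff_eq_zero_of_X_pow_dvd {F : PowerSeries ℚ} {N m : ℕ} (h : (PowerSeries.X : PowerSeries ℚ) ^ N ∣ F)
    (hm : m < N) : PowerSeries.coeff m F = 0 :=
  (PowerSeries.X_pow_dvd_iff.mp h) m hm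

lemma sum_triangle {m : ℕ} (G : ℕ → ℕ → ℚ) (hG : ∀ l l', m < l + l' → G l l' = 0) :
    ∑ l ∈ Finset.range (m + 1), ∑ l' ∈ Finset.range (m + 1), G l l'
      = ∑ s ∈ Finset.range (m + 1), ∑ i ∈ Finset.range (s + 1), G i (s - i) := by
  have h1 : ∀ l ∈ Finset.range (m + 1),
      ∑ l' ∈ Finset.range (m + 1), G l l' = ∑ l' ∈ Finset.range (m + 1 - l), G l l' := by
    intro l hl
    rw [Finset.mem_range] at hl
    refine (Finset.sum_subset (Finset.range_subset_range.mpr (by omega)) ?_).symm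
    intro l' _ hl'
    rw [Finset.mem_range] at hl'
    exact hG l l' (by omega)
  rw [Finset.sum_congr rfl h1, Finset.sum_sigma', Finset.sum_sigma']
  refine Finset.sum_nbij' (fun x => ⟨x.1 + x.2, x.1⟩) (fun y => ⟨y.2, y.1 - y.2⟩) ?_ ?_ ?_ ?_ ?_
  · intro x hx
    simp only [Finset.mem_sigma, Finset.mem_range] at hx ⊢
    omega
  · intro y hy
    simp only [Finset.mem_sigma, Finset.mem_range] at hy ⊢
    omega
  · intro x hx
    simp only [Finset.mem_sigma, Finset.mem_range] at hx
    simp only [Nat.add_sub_cancel_left]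
  · intro y hy
    simp only [Finset.mem_sigma, Finset.mem_range] at hy
    have : y.2 + (y.1 - y.2) = y.1 := by omega
    simp [this]
  · intro x hx
    simp only [Nat.add_sub_cancel_left]

lemma egf_Tc_mul (u : ℚ) (a b : ℕ → ℚ) :
    egf (Tc u a) * egf (Tc u b) =
      egf (Tc u fun s => ∑ i ∈ Finset.range (s + 1), (s.choose i : ℚ) * a i * b (s - i)) := by
  ext m
  set P : (ℕ → ℚ) → PowerSeries ℚ :=
    fun c => ∑ l ∈ Finset.range (m + 1), (c l * u ^ l) • Sst l with hP
  have key : ∀ c, PowerSeries.coeff m (egf (Tc u c)) = PowerSeries.coeff m (P c) := by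
    intro c
    have h0 := coeff_eq_zero_of_X_pow_dvd (egf_Tc_approx u c m) (Nat.lt_succ_self m)
    rw [map_sub, sub_eq_zero] at h0
    exact h0
  have hprod : PowerSeries.coeff m (egf (Tc u a) * egf (Tc u b))
      = PowerSeries.coeff m (P a * P b) := by
    have da := egf_Tc_approx u a m
    have db := egf_Tc_approx u b m
    have hdvd : (PowerSeries.X : PowerSeries ℚ) ^ (m + 1) ∣
        egf (Tc u a) * egf (Tc u b) - P a * P b := by
      have hid : egf (Tc u a) * egf (Tc u b) - P a * P b
          = (egf (Tc u a) - P a) * egf (Tc u b) + P a * (egf (Tc u b) - P b) := by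
        ring
      rw [hid]
      exact dvd_add (Dvd.dvd.mul_right da _) (Dvd.dvd.mul_left db _)
    have := coeff_eq_zero_of_X_pow_dvd hdvd (Nat.lt_succ_self m)
    rw [map_sub, sub_eq_zero] at this
    exact this
  rw [key, hprod]
  have hPP : P a * P b = ∑ l ∈ Finset.range (m + 1), ∑ l' ∈ Finset.range (m + 1),
      ((a l * u ^ l) * (b l' * u ^ l') * (((l + l').choose l : ℕ) : ℚ)) • Sst (l + l') := by
    rw [hP, Finset.sum_mul_sum]
    refine Finset.sum_congr rfl fun l _ => Finset.sum_congr rfl fun l' _ => ?_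
    rw [smul_mul_smul_comm, Sst_mul, smul_smul]
  rw [hPP]
  rw [map_sum]
  simp only [map_sum, PowerSeries.coeff_smul, smul_eq_mul]
  have hRHS : PowerSeries.coeff m
      (P fun s => ∑ i ∈ Finset.range (s + 1), (s.choose i : ℚ) * a i * b (s - i))
      = ∑ s ∈ Finset.range (m + 1), ∑ i ∈ Finset.range (s + 1),
          ((s.choose i : ℚ) * a i * b (s - i) * u ^ s) * PowerSeries.coeff m (Sst s) := by
    rw [hP, map_sum]
    refine Finset.sum_congr rfl fun s _ => ?_
    simp only [PowerSeries.coeff_smul, smul_eq_mul, Finset.sum_mul]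
  rw [hRHS]
  have := sum_triangle (m := m)
    (fun l l' => a l * u ^ l * (b l' * u ^ l') * (((l + l').choose l : ℕ) : ℚ)
      * PowerSeries.coeff m (Sst (l + l')))
    (fun l l' h => by simp only [coeff_Sst_eq_zero h]; ring)
  rw [this]
  refine Finset.sum_congr rfl fun s hs => Finset.sum_congr rfl fun i hi => ?_
  rw [Finset.mem_range] at hi
  have his : i + (s - i) = s := by omega
  rw [his]
  have hu : u ^ s = u ^ i * u ^ (s - i) := by rw [← pow_add, his]
  rw [hu]
  ring

lemma egf_Tc_geom (u z : ℚ) : egf (Tc u fun l => z ^ l) = onePlusTPow (u * z) := by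
  have hfun : (Tc u fun l => z ^ l) = fun m => ∏ i ∈ Finset.range m, (u * z - i) := by
    funext m
    rw [← sum_s1_mul_pow (u * z) m]
    unfold Tc
    refine Finset.sum_congr rfl fun l _ => ?_
    rw [mul_pow]
    ring
  unfold onePlusTPow
  rw [hfun]

lemma egf_Tc_smul (u q : ℚ) (a : ℕ → ℚ) :
    egf (Tc u fun l => q * a l) = PowerSeries.C q * egf (Tc u a) := by
  ext m
  rw [PowerSeries.coeff_C_mul, coeff_egf, coeff_egf, Tc, Tc, Finset.sum_div, Finset.sum_div,
    Finset.mul_sum]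
  refine Finset.sum_congr rfl fun l _ => ?_
  ring

lemma egf_Tc_sum (u : ℚ) (K : ℕ) (f : ℕ → ℕ → ℚ) :
    egf (Tc u fun l => ∑ j ∈ Finset.range K, f j l)
      = ∑ j ∈ Finset.range K, egf (Tc u (f j)) := by
  ext m
  rw [map_sum]
  simp only [coeff_egf, Tc, Finset.mul_sum, Finset.sum_div]
  rw [Finset.sum_comm]

lemma euler_scalar (k : ℕ) (c : ℕ → ℚ) (y : ℚ)
    (h : egf c * (PowerSeries.exp ℚ + 1) ^ k = 2 ^ k * expXT y) (w : ℚ) (l : ℕ) :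
    ∑ j ∈ Finset.range (k + 1), (k.choose j : ℚ) *
        ∑ i ∈ Finset.range (l + 1), (l.choose i : ℚ) * c i * ((j : ℚ) + w) ^ (l - i)
      = 2 ^ k * (y + w) ^ l := by
  have hfac : (l.factorial : ℚ) ≠ 0 := Nat.cast_ne_zero.mpr (Nat.factorial_ne_zero _)
  have hexp : (PowerSeries.exp ℚ + 1) ^ k * expXT w
      = ∑ j ∈ Finset.range (k + 1), PowerSeries.C (k.choose j : ℚ) * expXT ((j : ℚ) + w) := by
    rw [add_pow, Finset.sum_mul]
    refine Finset.sum_congr rfl fun j _ => ?_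
    rw [one_pow, mul_one, exp_pow_eq_expXT, ← expXT_mul,
      ← map_natCast (PowerSeries.C) (k.choose j)]
    ring
  have h2 : ∑ j ∈ Finset.range (k + 1),
        PowerSeries.C (k.choose j : ℚ) * (egf c * expXT ((j : ℚ) + w))
      = PowerSeries.C ((2 : ℚ) ^ k) * expXT (y + w) := by
    have e1 : ∑ j ∈ Finset.range (k + 1),
          PowerSeries.C (k.choose j : ℚ) * (egf c * expXT ((j : ℚ) + w))
        = egf c * ((PowerSeries.exp ℚ + 1) ^ k * expXT w) := by
      rw [hexp, Finset.mul_sum]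
      refine Finset.sum_congr rfl fun j _ => ?_
      ring
    rw [e1, ← mul_assoc, h, mul_assoc, expXT_mul]
    have e2 : (2 : PowerSeries ℚ) ^ k = PowerSeries.C ((2 : ℚ) ^ k) := by
      rw [map_pow, map_ofNat]
    rw [e2]
  have h3 := congrArg (PowerSeries.coeff l) h2
  rw [map_sum] at h3
  simp only [PowerSeries.coeff_C_mul, coeff_egf_mul_expXT] at h3
  rw [show expXT (y + w) = egf fun n => (y + w) ^ n from rfl, coeff_egf] at h3
  have h4 := congrArg (fun t => t * (l.factorial : ℚ)) h3
  rw [Finset.sum_mul] at h4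
  calc ∑ j ∈ Finset.range (k + 1), (k.choose j : ℚ) *
        ∑ i ∈ Finset.range (l + 1), (l.choose i : ℚ) * c i * ((j : ℚ) + w) ^ (l - i)
      = ∑ j ∈ Finset.range (k + 1), (k.choose j : ℚ) *
        ((∑ i ∈ Finset.range (l + 1), (l.choose i : ℚ) * c i * ((j : ℚ) + w) ^ (l - i))
          / (l.factorial : ℚ)) * (l.factorial : ℚ) := by
        refine Finset.sum_congr rfl fun j _ => ?_
        field_simp
    _ = (2 : ℚ) ^ k * ((y + w) ^ l / (l.factorial : ℚ)) * (l.factorial : ℚ) := by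
        rw [← h4]
    _ = 2 ^ k * (y + w) ^ l := by field_simp

lemma euler_scalar_neg (k : ℕ) (c : ℕ → ℚ) (y : ℚ)
    (h : egf c * (PowerSeries.exp ℚ + 1) ^ k = 2 ^ k * expXT y) (l : ℕ) :
    ∑ j ∈ Finset.range (k + 1), (k.choose j : ℚ) *
        ∑ i ∈ Finset.range (l + 1), (l.choose i : ℚ) * c i * (-(j : ℚ)) ^ (l - i)
      = 2 ^ k * (y - k) ^ l := by
  have base := euler_scalar k c y h (-(k : ℚ)) l
  rw [show y + -(k : ℚ) = y - k by ring] at base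
  rw [← base]
  rw [← Finset.sum_range_reflect
    (fun j => (k.choose j : ℚ) *
      ∑ i ∈ Finset.range (l + 1), (l.choose i : ℚ) * c i * ((j : ℚ) + -(k : ℚ)) ^ (l - i)) (k + 1)]
  refine Finset.sum_congr rfl fun j hj => ?_
  rw [Finset.mem_range] at hj
  have hjk : j ≤ k := by omega
  rw [show k + 1 - 1 - j = k - j from by omega, Nat.choose_symm hjk]
  congr 1
  refine Finset.sum_congr rfl fun i _ => ?_
  rw [Nat.cast_sub hjk]
  ring_nf

lemma one_add_one_add_X_pow_ne_zero (L k : ℕ) :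
    ((1 + (1 + PowerSeries.X) ^ L : PowerSeries ℚ)) ^ k ≠ 0 := by
  apply pow_ne_zero
  intro hcon
  have := congrArg (PowerSeries.constantCoeff) hcon
  rw [map_add, map_pow, map_add, map_one] at this
  simp at this

theorem boole2nd_order_k_eq_sum_stirling1_euler (k L : ℕ) (hk : 1 ≤ k) (hL : 0 < L) (x : ℚ)
    (Bhk : ℕ → ℚ) (Ek : ℕ → ℚ → ℚ)
    (hBhk : egf Bhk * (1 + (1 + PowerSeries.X) ^ L) ^ k =
      (1 + PowerSeries.X) ^ (L * k) * onePlusTPow x)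
    (hEk : ∀ y : ℚ, egf (fun m => Ek m y) * (PowerSeries.exp ℚ + 1) ^ k = 2 ^ k * expXT y)
    (m : ℕ) :
    Bhk m = ∑ l ∈ Finset.range (m + 1),
      s1 m l * (-1) ^ l * ((L : ℚ) ^ l / 2 ^ k) * Ek l (-x / L) := by
  have hLQ : (L : ℚ) ≠ 0 := Nat.cast_ne_zero.mpr hL.ne'
  have h2k : ((2 : ℚ) ^ k) ≠ 0 := by positivity
  set y : ℚ := -x / L with hy
  set c : ℕ → ℚ := fun l => Ek l y with hc
  set u : ℚ := -(L : ℚ) with hu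
  set d : ℕ → ℕ → ℚ := fun j l =>
    ∑ i ∈ Finset.range (l + 1), (l.choose i : ℚ) * c i * (-(j : ℚ)) ^ (l - i) with hd
  have stepA : egf (Tc u c) * (1 + (1 + PowerSeries.X) ^ L) ^ k
      = PowerSeries.C ((2 : ℚ) ^ k) * ((1 + PowerSeries.X) ^ (L * k) * onePlusTPow x) := by
    have hbin : ((1 : PowerSeries ℚ) + (1 + PowerSeries.X) ^ L) ^ k
        = ∑ j ∈ Finset.range (k + 1),
            (1 + PowerSeries.X) ^ (L * j) * ((k.choose j : ℕ) : PowerSeries ℚ) := by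
      rw [add_comm (1 : PowerSeries ℚ) ((1 + PowerSeries.X) ^ L), add_pow]
      refine Finset.sum_congr rfl fun j _ => ?_
      rw [one_pow, mul_one, ← pow_mul]
    rw [hbin, Finset.mul_sum]
    have hterm : ∀ j ∈ Finset.range (k + 1),
        egf (Tc u c) * ((1 + PowerSeries.X) ^ (L * j) * ((k.choose j : ℕ) : PowerSeries ℚ))
          = egf (Tc u fun l => (k.choose j : ℚ) * d j l) := by
      intro j _
      have hgeom : (1 + PowerSeries.X) ^ (L * j) = egf (Tc u fun l => (-(j : ℚ)) ^ l) := by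
        rw [egf_Tc_geom, show u * -(j : ℚ) = ((L * j : ℕ) : ℚ) by rw [hu]; push_cast; ring,
          onePlusTPow_natCast]
      rw [hgeom, ← mul_assoc, egf_Tc_mul, egf_Tc_smul,
        ← map_natCast (PowerSeries.C) (k.choose j)]
      ring
    rw [Finset.sum_congr rfl hterm, ← egf_Tc_sum u (k + 1) (fun j l => (k.choose j : ℚ) * d j l)]
    have he : (fun l => ∑ j ∈ Finset.range (k + 1), (k.choose j : ℚ) * d j l)
        = fun l => (2 : ℚ) ^ k * ((y - k) ^ l) := by
      funext l
      exact euler_scalar_neg k c y (hEk y) l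
    rw [he, egf_Tc_smul, egf_Tc_geom]
    have harg : u * (y - k) = x + ((L * k : ℕ) : ℚ) := by
      rw [hu, hy]
      push_cast
      field_simp
      ring
    rw [harg, onePlusTPow_add_nat]
  have hcancel : PowerSeries.C ((2 : ℚ) ^ k) * egf Bhk = egf (Tc u c) := by
    apply mul_right_cancel₀ (one_add_one_add_X_pow_ne_zero L k)
    rw [stepA, ← hBhk]
    ring
  have hcm := congrArg (PowerSeries.coeff m) hcancel
  rw [PowerSeries.coeff_C_mul, coeff_egf, coeff_egf] at hcm
  have hfm : (m.factorial : ℚ) ≠ 0 := Nat.cast_ne_zero.mpr (Nat.factorial_ne_zero _)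
  have hmul : (2 : ℚ) ^ k * Bhk m = Tc u c m := by
    field_simp at hcm
    exact hcm
  have hsum : (2 : ℚ) ^ k * (∑ l ∈ Finset.range (m + 1),
      s1 m l * (-1) ^ l * ((L : ℚ) ^ l / 2 ^ k) * Ek l y) = Tc u c m := by
    rw [Finset.mul_sum, Tc]
    refine Finset.sum_congr rfl fun l _ => ?_
    simp only [hu, hc]
    rw [show (-(L : ℚ)) ^ l = (-1) ^ l * (L : ℚ) ^ l from neg_pow _ _]
    calc (2 : ℚ) ^ k * (s1 m l * (-1) ^ l * ((L : ℚ) ^ l / 2 ^ k) * Ek l y)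
        = s1 m l * (-1) ^ l * (L : ℚ) ^ l * Ek l y * ((2 : ℚ) ^ k / 2 ^ k) := by ring
      _ = s1 m l * ((-1) ^ l * (L : ℚ) ^ l) * Ek l y := by rw [div_self h2k]; ring

  exact mul_left_cancel₀ h2k (hmul.trans hsum.symm)
end
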